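/- arXiv:math/0409313 — 2 statements merged into one kernel-verified Lean document; each statement's English description precedes it below -/
import Mathlib

section
/- For any N ≥ 0, γ ∈ (0,1], and x, y ∈ ℝ^d, the weight μ_{N,γ}(x) = (1+|x|²)^N / (1+γ|x|²)^N satisfies μ_{N,γ}(x)/μ_{N,γ}(y) + μ_{N,γ}(y)/μ_{N,γ}(x) ≤ C_N (1+|x−y|²)^N, where C_N depends only on N (and d). -/
noncomputable def muWeight (d : ℕ) (N γ : ℝ) (x : EuclideanSpace ℝ (Fin d)) : ℝ :=
  (1 + ‖x‖ ^ 2) ^ N / (1 + γ * ‖x‖ ^ 2) ^ N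

lemma mu_base (γ s t r : ℝ) (hγ : 0 < γ) (hγ1 : γ ≤ 1) (hs : 0 ≤ s) (ht : 0 ≤ t)
    (hr : 0 ≤ r) (hstr : s ≤ 2 * t + 2 * r) :
    (1 + s) * (1 + γ * t) ≤ 2 * (1 + r) * ((1 + t) * (1 + γ * s)) := by
  nlinarith [mul_nonneg ht hr, mul_nonneg hs ht, mul_nonneg (mul_nonneg hγ.le ht) hr,
    mul_nonneg (mul_nonneg hγ.le hs) ht, mul_nonneg (mul_nonneg hγ.le hs) hr,
    mul_nonneg (mul_nonneg (mul_nonneg hγ.le hs) ht) hr]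

theorem stmt0 (d : ℕ) (N : ℝ) (hN : 0 ≤ N) :
    ∃ C : ℝ, 0 < C ∧ ∀ γ : ℝ, 0 < γ → γ ≤ 1 →
      ∀ x y : EuclideanSpace ℝ (Fin d),
        muWeight d N γ x / muWeight d N γ y + muWeight d N γ y / muWeight d N γ x
          ≤ C * (1 + ‖x - y‖ ^ 2) ^ N := by
  refine ⟨2 * 2 ^ N, by positivity, fun γ hγ hγ1 x y => ?_⟩
  set s := ‖x‖ ^ 2 with hs_def
  set t := ‖y‖ ^ 2 with ht_def
  set r := ‖x - y‖ ^ 2 with hr_def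
  have hs : 0 ≤ s := sq_nonneg _
  have ht : 0 ≤ t := sq_nonneg _
  have hr : 0 ≤ r := sq_nonneg _
  have hA : (0:ℝ) < 1 + s := by linarith
  have hB : (0:ℝ) < 1 + γ * s := by nlinarith
  have hC : (0:ℝ) < 1 + t := by linarith
  have hD : (0:ℝ) < 1 + γ * t := by nlinarith
  have hR : (0:ℝ) < 1 + r := by linarith
  have key : ∀ a b c e : ℝ, 0 < a → 0 < b → 0 < c → 0 < e →
      a * e ≤ 2 * (1 + r) * (c * b) →
      (a ^ N / b ^ N) / (c ^ N / e ^ N) ≤ 2 ^ N * (1 + r) ^ N := by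
    intro a b c e ha hb hc he hineq
    have h1 : (a ^ N / b ^ N) / (c ^ N / e ^ N) = (a * e / (b * c)) ^ N := by
      rw [Real.div_rpow (by positivity) (by positivity),
        Real.mul_rpow ha.le he.le, Real.mul_rpow hb.le hc.le]
      have hbN := (Real.rpow_pos_of_pos hb N).ne'
      have hcN := (Real.rpow_pos_of_pos hc N).ne'
      have heN := (Real.rpow_pos_of_pos he N).ne'
      field_simp
    rw [h1, ← Real.mul_rpow (by norm_num) hR.le]
    apply Real.rpow_le_rpow (by positivity) _ hN
    rw [div_le_iff₀ (by positivity)]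
    nlinarith [hineq]
  have hxy : s ≤ 2 * t + 2 * r := by
    have h := norm_add_le y (x - y)
    rw [add_sub_cancel] at h
    simp only [hs_def, ht_def, hr_def]
    nlinarith [norm_nonneg x, norm_nonneg y, norm_nonneg (x - y),
      mul_le_mul h h (norm_nonneg x) (by positivity),
      sq_nonneg (‖y‖ - ‖x - y‖)]
  have hyx : t ≤ 2 * s + 2 * r := by
    have h := norm_sub_le x (x - y)
    rw [sub_sub_cancel] at h
    simp only [hs_def, ht_def, hr_def]
    nlinarith [norm_nonneg x, norm_nonneg y, norm_nonneg (x - y),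
      mul_le_mul h h (norm_nonneg y) (by positivity),
      sq_nonneg (‖x‖ - ‖x - y‖)]
  have h1 : muWeight d N γ x / muWeight d N γ y ≤ 2 ^ N * (1 + r) ^ N := by
    unfold muWeight
    exact key _ _ _ _ hA hB hC hD (mu_base γ s t r hγ hγ1 hs ht hr hxy)
  have h2 : muWeight d N γ y / muWeight d N γ x ≤ 2 ^ N * (1 + r) ^ N := by
    unfold muWeight
    exact key _ _ _ _ hC hD hA hB (mu_base γ t s r hγ hγ1 ht hs hr hyx)
  calc muWeight d N γ x / muWeight d N γ y + muWeight d N γ y / muWeight d N γ x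
      ≤ 2 ^ N * (1 + r) ^ N + 2 ^ N * (1 + r) ^ N := add_le_add h1 h2
    _ = 2 * 2 ^ N * (1 + r) ^ N := by ring
end

section
/- For any N ≥ 0 and γ ∈ (0,1], Δ μ_{N,γ} = μ_{N,γ} b for a function b with |b(x)| ≤ C_N (1+|x|²)^{-1} for all x ∈ ℝ^d, with C_N independent of γ; similarly Δ(μ_{N,γ}^{-1}) = μ_{N,γ}^{-1} b̃ with |b̃(x)| ≤ C_N(1+|x|²)^{-1}. -/
/-- The Euclidean Laplacian, written as a sum of repeated directional derivatives. -/
noncomputable def laplacian (d : ℕ) (f : EuclideanSpace ℝ (Fin d) → ℝ)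
    (x : EuclideanSpace ℝ (Fin d)) : ℝ :=
  ∑ j : Fin d,
    fderiv ℝ (fun y => fderiv ℝ f y (EuclideanSpace.single j 1)) x (EuclideanSpace.single j 1)

open Real

noncomputable def Pfun (M γ t : ℝ) : ℝ := M / (1 + t) - M * γ / (1 + γ * t)
noncomputable def Pdfun (M γ t : ℝ) : ℝ := -M / (1 + t) ^ 2 + M * γ ^ 2 / (1 + γ * t) ^ 2
noncomputable def Ffun (M γ t : ℝ) : ℝ := (1 + t) ^ M * (1 + γ * t) ^ (-M)

lemma hasDerivAt_Ffun (M : ℝ) {γ t : ℝ} (hγ : 0 < γ) (ht : 0 ≤ t) :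
    HasDerivAt (Ffun M γ) (Ffun M γ t * Pfun M γ t) t := by
  have h1 : (0:ℝ) < 1 + t := by linarith
  have h2 : (0:ℝ) < 1 + γ * t := by nlinarith
  have d1 : HasDerivAt (fun s : ℝ => (1 + s) ^ M) (1 * M * (1 + t) ^ (M - 1)) t :=
    ((hasDerivAt_id t).const_add 1).rpow_const (Or.inl h1.ne')
  have d2 : HasDerivAt (fun s : ℝ => (1 + γ * s) ^ (-M))
      (γ * 1 * (-M) * (1 + γ * t) ^ (-M - 1)) t :=
    (((hasDerivAt_id t).const_mul γ).const_add 1).rpow_const (Or.inl h2.ne')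
  have := d1.mul d2
  refine this.congr_deriv ?_
  have e1 : (1 + t) ^ (M - 1) = (1 + t) ^ M / (1 + t) := rpow_sub_one h1.ne' M
  have e2 : (1 + γ * t) ^ (-M - 1) = (1 + γ * t) ^ (-M) / (1 + γ * t) :=
    rpow_sub_one h2.ne' (-M)
  rw [e1, e2]
  unfold Ffun Pfun
  field_simp
  ring

lemma hasDerivAt_Pfun (M : ℝ) {γ t : ℝ} (hγ : 0 < γ) (ht : 0 ≤ t) :
    HasDerivAt (Pfun M γ) (Pdfun M γ t) t := by
  have h1 : (0:ℝ) < 1 + t := by linarith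
  have h2 : (0:ℝ) < 1 + γ * t := by nlinarith
  have d1 : HasDerivAt (fun s : ℝ => M / (1 + s))
      ((0 * (1 + t) - M * 1) / (1 + t) ^ 2) t :=
    (hasDerivAt_const t M).div ((hasDerivAt_id t).const_add 1) h1.ne'
  have d2 : HasDerivAt (fun s : ℝ => M * γ / (1 + γ * s))
      ((0 * (1 + γ * t) - M * γ * (γ * 1)) / (1 + γ * t) ^ 2) t :=
    (hasDerivAt_const t (M * γ)).div (((hasDerivAt_id t).const_mul γ).const_add 1) h2.ne'
  have := d1.sub d2
  refine this.congr_deriv ?_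
  unfold Pdfun
  field_simp
  ring

lemma hasDerivAt_FPfun (M : ℝ) {γ t : ℝ} (hγ : 0 < γ) (ht : 0 ≤ t) :
    HasDerivAt (fun s => Ffun M γ s * Pfun M γ s)
      (Ffun M γ t * ((Pfun M γ t) ^ 2 + Pdfun M γ t)) t := by
  have := (hasDerivAt_Ffun M hγ ht).mul (hasDerivAt_Pfun M hγ ht)
  refine this.congr_deriv ?_
  ring


noncomputable def bfun (d : ℕ) (M γ : ℝ) (x : EuclideanSpace ℝ (Fin d)) : ℝ :=
  4 * ‖x‖ ^ 2 * ((Pfun M γ (‖x‖ ^ 2)) ^ 2 + Pdfun M γ (‖x‖ ^ 2)) +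
    2 * d * Pfun M γ (‖x‖ ^ 2)

lemma laplacian_Ffun (d : ℕ) (M : ℝ) {γ : ℝ} (hγ : 0 < γ) (x : EuclideanSpace ℝ (Fin d)) :
    laplacian d (fun y => Ffun M γ (‖y‖ ^ 2)) x = Ffun M γ (‖x‖ ^ 2) * bfun d M γ x := by
  have hinner : ∀ (y : EuclideanSpace ℝ (Fin d)) (j : Fin d),
      (innerSL ℝ y) (EuclideanSpace.single j 1) = y j := by
    intro y j
    simp [innerSL_apply_apply, EuclideanSpace.inner_single_right]
  have hFD : ∀ y : EuclideanSpace ℝ (Fin d),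
      HasFDerivAt (fun z => Ffun M γ (‖z‖ ^ 2))
        ((Ffun M γ (‖y‖ ^ 2) * Pfun M γ (‖y‖ ^ 2)) • (2 • innerSL ℝ y)) y := fun y =>
    (hasDerivAt_Ffun M hγ (by positivity)).comp_hasFDerivAt y
      (hasStrictFDerivAt_norm_sq y).hasFDerivAt
  have hfd1 : ∀ j : Fin d,
      (fun y => fderiv ℝ (fun z => Ffun M γ (‖z‖ ^ 2)) y (EuclideanSpace.single j 1))
      = fun y => Ffun M γ (‖y‖ ^ 2) * Pfun M γ (‖y‖ ^ 2) * (2 * y j) := by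
    intro j; funext y
    rw [(hFD y).fderiv]
    simp [hinner y j, two_smul]
    ring
  have hA : HasFDerivAt (fun y : EuclideanSpace ℝ (Fin d) =>
        Ffun M γ (‖y‖ ^ 2) * Pfun M γ (‖y‖ ^ 2))
      ((Ffun M γ (‖x‖ ^ 2) * ((Pfun M γ (‖x‖ ^ 2)) ^ 2 + Pdfun M γ (‖x‖ ^ 2))) •
        (2 • innerSL ℝ x)) x :=
    (hasDerivAt_FPfun M hγ (by positivity)).comp_hasFDerivAt x
      (hasStrictFDerivAt_norm_sq x).hasFDerivAt
  have key : ∀ j : Fin d,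
      fderiv ℝ (fun y => fderiv ℝ (fun z => Ffun M γ (‖z‖ ^ 2)) y (EuclideanSpace.single j 1))
        x (EuclideanSpace.single j 1)
      = Ffun M γ (‖x‖ ^ 2) * Pfun M γ (‖x‖ ^ 2) * 2 +
        (2 * x j) * (Ffun M γ (‖x‖ ^ 2) * ((Pfun M γ (‖x‖ ^ 2)) ^ 2 + Pdfun M γ (‖x‖ ^ 2)) *
          (2 * x j)) := by
    intro j
    rw [hfd1 j]
    have hB : HasFDerivAt (fun y : EuclideanSpace ℝ (Fin d) => (2:ℝ) * y j)
        ((2:ℝ) • (EuclideanSpace.proj j : EuclideanSpace ℝ (Fin d) →L[ℝ] ℝ)) x :=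
      (EuclideanSpace.proj j : EuclideanSpace ℝ (Fin d) →L[ℝ] ℝ).hasFDerivAt.const_mul 2
    have hAB : HasFDerivAt (fun y : EuclideanSpace ℝ (Fin d) =>
        Ffun M γ (‖y‖ ^ 2) * Pfun M γ (‖y‖ ^ 2) * (2 * y j)) _ x := hA.mul hB
    rw [hAB.fderiv]
    simp [hinner x j, two_smul, EuclideanSpace.single_apply]
    ring
  unfold laplacian
  rw [Finset.sum_congr rfl fun j _ => key j]
  have hsum : ∑ j : Fin d, (x j) ^ 2 = ‖x‖ ^ 2 := by
    rw [PiLp.norm_sq_eq_of_L2]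
    simp [sq_abs]
  rw [Finset.sum_add_distrib, Finset.sum_const, Finset.card_univ, Fintype.card_fin]
  have : ∑ j : Fin d, (2 * x j) *
      (Ffun M γ (‖x‖ ^ 2) * ((Pfun M γ (‖x‖ ^ 2)) ^ 2 + Pdfun M γ (‖x‖ ^ 2)) * (2 * x j))
      = (4 * (Ffun M γ (‖x‖ ^ 2) * ((Pfun M γ (‖x‖ ^ 2)) ^ 2 + Pdfun M γ (‖x‖ ^ 2)))) *
        ∑ j : Fin d, (x j) ^ 2 := by
    rw [Finset.mul_sum]
    exact Finset.sum_congr rfl fun j _ => by ring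
  rw [this, hsum, nsmul_eq_mul]
  unfold bfun
  ring

lemma bfun_bound (d : ℕ) (M : ℝ) {γ : ℝ} (hγ : 0 < γ) (hγ1 : γ ≤ 1)
    (x : EuclideanSpace ℝ (Fin d)) :
    |bfun d M γ x| ≤ (16 * M ^ 2 + 8 * |M| + 4 * d * |M| + 1) * (1 + ‖x‖ ^ 2)⁻¹ := by
  set t : ℝ := ‖x‖ ^ 2 with htdef
  have ht : 0 ≤ t := by positivity
  have h1 : (0:ℝ) < 1 + t := by linarith
  have h2 : (0:ℝ) < 1 + γ * t := by nlinarith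
  have hq : γ / (1 + γ * t) ≤ 1 / (1 + t) := by
    rw [div_le_div_iff₀ h2 h1]; nlinarith
  have hq0 : 0 ≤ γ / (1 + γ * t) := by positivity
  have hP : |Pfun M γ t| ≤ 2 * |M| / (1 + t) := by
    unfold Pfun
    have := abs_sub (M / (1 + t)) (M * γ / (1 + γ * t))
    have e1 : |M / (1 + t)| = |M| / (1 + t) := by
      rw [abs_div, abs_of_pos h1]
    have e2 : |M * γ / (1 + γ * t)| = |M| * (γ / (1 + γ * t)) := by
      rw [abs_div, abs_mul, abs_of_pos hγ, abs_of_pos h2, mul_div_assoc]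
    have e3 : |M| * (γ / (1 + γ * t)) ≤ |M| * (1 / (1 + t)) :=
      mul_le_mul_of_nonneg_left hq (abs_nonneg M)
    calc |M / (1 + t) - M * γ / (1 + γ * t)|
        ≤ |M / (1 + t)| + |M * γ / (1 + γ * t)| := abs_sub _ _
      _ ≤ |M| / (1 + t) + |M| * (1 / (1 + t)) := by rw [e1, e2]; linarith
      _ = 2 * |M| / (1 + t) := by ring
  have hPd : |Pdfun M γ t| ≤ 2 * |M| / (1 + t) ^ 2 := by
    unfold Pdfun
    have e1 : |-M / (1 + t) ^ 2| = |M| / (1 + t) ^ 2 := by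
      rw [abs_div, abs_neg, abs_of_pos (by positivity : (0:ℝ) < (1+t)^2)]
    have e2 : |M * γ ^ 2 / (1 + γ * t) ^ 2| = |M| * (γ / (1 + γ * t)) ^ 2 := by
      rw [abs_div, abs_mul, abs_of_pos (by positivity : (0:ℝ) < γ^2),
        abs_of_pos (by positivity : (0:ℝ) < (1 + γ*t)^2)]
      rw [div_pow]; ring
    have e3 : (γ / (1 + γ * t)) ^ 2 ≤ (1 / (1 + t)) ^ 2 := by
      apply pow_le_pow_left₀ hq0 hq
    have e4 : |M| * (γ / (1 + γ * t)) ^ 2 ≤ |M| * (1 / (1 + t)) ^ 2 :=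
      mul_le_mul_of_nonneg_left e3 (abs_nonneg M)
    calc |-M / (1 + t) ^ 2 + M * γ ^ 2 / (1 + γ * t) ^ 2|
        ≤ |-M / (1 + t) ^ 2| + |M * γ ^ 2 / (1 + γ * t) ^ 2| := abs_add_le _ _
      _ ≤ |M| / (1 + t) ^ 2 + |M| * (1 / (1 + t)) ^ 2 := by rw [e1, e2]; linarith
      _ = 2 * |M| / (1 + t) ^ 2 := by rw [div_pow]; ring
  -- main bound
  have hb : |bfun d M γ x| ≤ 4 * t * (|Pfun M γ t| ^ 2 + |Pdfun M γ t|) +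
      2 * d * |Pfun M γ t| := by
    unfold bfun
    rw [← htdef]
    calc |4 * t * ((Pfun M γ t) ^ 2 + Pdfun M γ t) + 2 * d * Pfun M γ t|
        ≤ |4 * t * ((Pfun M γ t) ^ 2 + Pdfun M γ t)| + |2 * d * Pfun M γ t| := abs_add_le _ _
      _ = 4 * t * |(Pfun M γ t) ^ 2 + Pdfun M γ t| + 2 * d * |Pfun M γ t| := by
          rw [abs_mul, abs_mul, abs_mul, abs_mul, abs_of_nonneg ht, Nat.abs_cast]
          norm_num
      _ ≤ 4 * t * (|Pfun M γ t| ^ 2 + |Pdfun M γ t|) + 2 * d * |Pfun M γ t| := by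
          have h3 : |(Pfun M γ t) ^ 2 + Pdfun M γ t| ≤ |Pfun M γ t| ^ 2 + |Pdfun M γ t| := by
            calc |(Pfun M γ t) ^ 2 + Pdfun M γ t|
                ≤ |(Pfun M γ t) ^ 2| + |Pdfun M γ t| := abs_add_le _ _
              _ = |Pfun M γ t| ^ 2 + |Pdfun M γ t| := by
                  rw [abs_of_nonneg (sq_nonneg _), sq_abs]
          have h4 : (0:ℝ) ≤ 4 * t := by positivity
          have h5 : (0:ℝ) ≤ 2 * (d:ℝ) := by positivity
          nlinarith [abs_nonneg (Pfun M γ t)]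
  have hu1 : t * (1 + t)⁻¹ ≤ 1 := by
    rw [← div_eq_mul_inv, div_le_one h1]; linarith
  have hu2 : (1 + t)⁻¹ ≤ 1 := by
    rw [inv_le_one_iff₀]; right; linarith
  have hu0 : (0:ℝ) < (1 + t)⁻¹ := by positivity
  have hM2 : M ^ 2 = |M| ^ 2 := (sq_abs M).symm
  calc |bfun d M γ x|
      ≤ 4 * t * (|Pfun M γ t| ^ 2 + |Pdfun M γ t|) + 2 * d * |Pfun M γ t| := hb
    _ ≤ 4 * t * ((2 * |M| / (1 + t)) ^ 2 + 2 * |M| / (1 + t) ^ 2) +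
        2 * d * (2 * |M| / (1 + t)) := by
        gcongr
    _ = (16 * M ^ 2 + 8 * |M|) * (t * (1 + t)⁻¹) * (1 + t)⁻¹ +
        4 * d * |M| * (1 + t)⁻¹ := by
        rw [div_pow]
        field_simp
        ring_nf
        simp only [sq_abs]
        ring
    _ ≤ (16 * M ^ 2 + 8 * |M| + 4 * d * |M| + 1) * (1 + t)⁻¹ := by
        have hA : (0:ℝ) ≤ 16 * M ^ 2 + 8 * |M| := by positivity
        have key := mul_le_mul_of_nonneg_right
          (mul_le_mul_of_nonneg_left hu1 hA) hu0.le
        have hd0 : (0:ℝ) ≤ (d:ℝ) := Nat.cast_nonneg d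
        nlinarith [abs_nonneg M, mul_nonneg (mul_nonneg hd0 (abs_nonneg M)) hu0.le]

lemma muWeight_eq (d : ℕ) (N : ℝ) {γ : ℝ} (hγ : 0 < γ) :
    muWeight d N γ = fun y => Ffun N γ (‖y‖ ^ 2) := by
  funext y
  have h2 : (0:ℝ) ≤ 1 + γ * ‖y‖ ^ 2 := by positivity
  unfold muWeight Ffun
  rw [Real.rpow_neg h2, div_eq_mul_inv]

lemma muWeight_inv_eq (d : ℕ) (N : ℝ) {γ : ℝ} (hγ : 0 < γ) :
    (fun y => (muWeight d N γ y)⁻¹) = fun y => Ffun (-N) γ (‖y‖ ^ 2) := by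
  funext y
  have h1 : (0:ℝ) ≤ 1 + ‖y‖ ^ 2 := by positivity
  have h2 : (0:ℝ) ≤ 1 + γ * ‖y‖ ^ 2 := by positivity
  unfold muWeight Ffun
  rw [Real.rpow_neg h1, neg_neg, inv_div, div_eq_mul_inv, mul_comm]

/-- `Δ μ_{N,γ} = μ_{N,γ} b` with `|b(x)| ≤ C_N (1+|x|²)^{-1}` and
`Δ (μ_{N,γ}⁻¹) = μ_{N,γ}⁻¹ b̃` with `|b̃(x)| ≤ C_N (1+|x|²)^{-1}`, uniformly in `γ ∈ (0,1]`. -/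
theorem stmt3 (d : ℕ) (N : ℝ) (hN : 0 ≤ N) :
    ∃ C : ℝ, 0 < C ∧ ∀ γ : ℝ, 0 < γ → γ ≤ 1 →
      (∃ b : EuclideanSpace ℝ (Fin d) → ℝ,
        (∀ x, laplacian d (muWeight d N γ) x = muWeight d N γ x * b x) ∧
        (∀ x, |b x| ≤ C * (1 + ‖x‖ ^ 2) ^ (-1 : ℝ))) ∧
      (∃ bt : EuclideanSpace ℝ (Fin d) → ℝ,
        (∀ x, laplacian d (fun y => (muWeight d N γ y)⁻¹) x = (muWeight d N γ x)⁻¹ * bt x) ∧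
        (∀ x, |bt x| ≤ C * (1 + ‖x‖ ^ 2) ^ (-1 : ℝ))) := by
  refine ⟨16 * N ^ 2 + 8 * N + 4 * d * N + 1, by positivity, fun γ hγ hγ1 => ?_⟩
  have habs : |N| = N := abs_of_nonneg hN
  have habs' : |(-N)| = N := by rw [abs_neg, habs]
  constructor
  · refine ⟨bfun d N γ, fun x => ?_, fun x => ?_⟩
    · rw [muWeight_eq d N hγ]
      exact laplacian_Ffun d N hγ x
    · have := bfun_bound d N hγ hγ1 x
      rw [habs] at this
      rw [Real.rpow_neg_one]
      exact this
  · refine ⟨bfun d (-N) γ, fun x => ?_, fun x => ?_⟩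
    · rw [muWeight_inv_eq d N hγ, congrFun (muWeight_inv_eq d N hγ) x]
      exact laplacian_Ffun d (-N) hγ x
    · have := bfun_bound d (-N) hγ hγ1 x
      rw [habs'] at this
      norm_num at this
      rw [Real.rpow_neg_one]
      convert this using 2
end
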